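/- arXiv:1812.11781 — 2 statements merged into one kernel-verified Lean document; each statement's English description precedes it below -/
import Mathlib

section
/- Let (X, μ) be an atomless σ-finite non-zero measure space and N a Young–Orlicz function with J(N) < ∞, and let k₀[N] ∈ (1, ∞) be the unique solution of Q[N](k₀[N]) = 1. Then for every f ∈ wL(N) one has ‖f‖_{sL(N)} ≤ k₀[N] · ‖f‖_{wL(N)}. -/
open MeasureTheory ENNReal Set Filter Topology

/-- A Young–Orlicz function: even, continuous, convex, non-negative, strictly increasing to
infinity on `[0, ∞)`, with `N u / u → 0` as `u → 0⁺` and `N u / u → ∞` as `u → ∞`. -/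
structure IsYoungOrlicz (N : ℝ → ℝ) : Prop where
  even : ∀ u, N (-u) = N u
  continuous : Continuous N
  convexOn : ConvexOn ℝ Set.univ N
  nonneg : ∀ u, 0 ≤ N u
  strictMonoOn : StrictMonoOn N (Set.Ici 0)
  tendsto_atTop : Filter.Tendsto N Filter.atTop Filter.atTop
  tendsto_div_zero : Filter.Tendsto (fun u => N u / u) (nhdsWithin 0 (Set.Ioi 0)) (nhds 0)
  tendsto_div_atTop : Filter.Tendsto (fun u => N u / u) Filter.atTop Filter.atTop

/-- A measure is atomless if every set of positive measure has a measurable subset of strictly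
smaller positive measure. -/
def Atomless {X : Type*} [MeasurableSpace X] (μ : MeasureTheory.Measure X) : Prop :=
  ∀ s : Set X, MeasurableSet s → 0 < μ s →
    ∃ t : Set X, MeasurableSet t ∧ t ⊆ s ∧ 0 < μ t ∧ μ t < μ s

/-- The tail function `T[f](t) = μ {x : |f x| ≥ t}`. -/
noncomputable def tailFun {X : Type*} [MeasurableSpace X] (μ : MeasureTheory.Measure X)
    (f : X → ℝ) (t : ℝ) : ℝ≥0∞ :=
  μ {x | t ≤ |f x|}

/-- `V[N](t) = min (μ X) (1 / N t)` (computed in `ℝ≥0∞`, so `1/0 = ∞`). -/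
noncomputable def Vfun {X : Type*} [MeasurableSpace X] (μ : MeasureTheory.Measure X)
    (N : ℝ → ℝ) (t : ℝ) : ℝ≥0∞ :=
  min (μ Set.univ) (ENNReal.ofReal (N t))⁻¹

/-- The strong (Luxemburg) Orlicz norm, with value `∞` when `f ∉ sL(N)`. -/
noncomputable def strongNorm {X : Type*} [MeasurableSpace X] (μ : MeasureTheory.Measure X)
    (N : ℝ → ℝ) (f : X → ℝ) : ℝ≥0∞ :=
  sInf (ENNReal.ofReal ''
    {k : ℝ | 0 < k ∧ ∫⁻ x, ENNReal.ofReal (N (|f x| / k)) ∂μ ≤ 1})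

/-- The weak Orlicz (tail) norm `‖f‖_{wL(N)} = inf {K > 0 : ∀ t > 0, T[f](t) ≤ V[N](t/K)}`,
with value `∞` when `f ∉ wL(N)`. -/
noncomputable def weakNorm {X : Type*} [MeasurableSpace X] (μ : MeasureTheory.Measure X)
    (N : ℝ → ℝ) (f : X → ℝ) : ℝ≥0∞ :=
  sInf (ENNReal.ofReal ''
    {K : ℝ | 0 < K ∧ ∀ t > 0, tailFun μ f t ≤ Vfun μ N (t / K)})

/-- `Y(N) = sup { ‖f‖_{sL(N)} / ‖f‖_{wL(N)} : f ∈ wL(N), f ≠ 0 }`. -/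
noncomputable def Ynorm {X : Type*} [MeasurableSpace X] (μ : MeasureTheory.Measure X)
    (N : ℝ → ℝ) : ℝ≥0∞ :=
  ⨆ (f : X → ℝ) (_ : Measurable f) (_ : ¬ f =ᵐ[μ] (0 : X → ℝ))
    (_ : weakNorm μ N f ≠ ⊤), strongNorm μ N f / weakNorm μ N f

/-- The (generalized) inverse of a Young–Orlicz function on `[0, ∞)`. -/
noncomputable def Ninv (N : ℝ → ℝ) (w : ℝ) : ℝ :=
  sInf {u : ℝ | 0 ≤ u ∧ w ≤ N u}

/-- `Q[N](k) = ∫_{y₀}^∞ N(y/k) |d(1/N(y))| = ∫_{1/μ(X)}^∞ N(N⁻¹(w)/k) w⁻² dw`. -/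
noncomputable def Qfun {X : Type*} [MeasurableSpace X] (μ : MeasureTheory.Measure X)
    (N : ℝ → ℝ) (k : ℝ) : ℝ≥0∞ :=
  ∫⁻ w in Set.Ioi ((μ Set.univ)⁻¹.toReal), ENNReal.ofReal (N (Ninv N w / k) / w ^ 2)

/-- `G(α) = ∫₀^{1/2} (1 - z)⁻² z^{-α} dz`. -/
noncomputable def Gfun (α : ℝ) : ℝ≥0∞ :=
  ∫⁻ z in Set.Ioo (0 : ℝ) (1/2), ENNReal.ofReal ((1 - z) ^ (-(2:ℝ)) * z ^ (-α))

section Aux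

variable {N : ℝ → ℝ}

lemma IsYoungOrlicz.zero (hN : IsYoungOrlicz N) : N 0 = 0 := by
  have h1 : Tendsto N (nhdsWithin 0 (Ioi 0)) (nhds (N 0)) :=
    (hN.continuous.tendsto 0).mono_left nhdsWithin_le_nhds
  have hid : Tendsto (fun u : ℝ => u) (nhdsWithin 0 (Ioi 0)) (nhds 0) :=
    tendsto_id.mono_left nhdsWithin_le_nhds
  have h2 : Tendsto (fun u : ℝ => N u / u * u) (nhdsWithin 0 (Ioi 0)) (nhds 0) := by
    simpa using hN.tendsto_div_zero.mul hid
  have h2' : Tendsto N (nhdsWithin 0 (Ioi 0)) (nhds 0) := by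
    refine h2.congr' ?_
    filter_upwards [self_mem_nhdsWithin] with u hu
    exact div_mul_cancel₀ _ (ne_of_gt hu)
  exact tendsto_nhds_unique h1 h2'

lemma IsYoungOrlicz.pos (hN : IsYoungOrlicz N) {u : ℝ} (hu : 0 < u) : 0 < N u := by
  have := hN.strictMonoOn (le_refl (0:ℝ)) hu.le hu
  rwa [hN.zero] at this

lemma ninv_set_nonempty (hN : IsYoungOrlicz N) (w : ℝ) :
    {u : ℝ | 0 ≤ u ∧ w ≤ N u}.Nonempty := by
  obtain ⟨u, hu1, hu2⟩ := ((hN.tendsto_atTop.eventually_ge_atTop w).and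
    (eventually_ge_atTop (0:ℝ))).exists
  exact ⟨u, hu2, hu1⟩

lemma ninv_set_bddBelow (w : ℝ) : BddBelow {u : ℝ | 0 ≤ u ∧ w ≤ N u} :=
  ⟨0, fun _ hu => hu.1⟩

lemma Ninv_nonneg (hN : IsYoungOrlicz N) (w : ℝ) : 0 ≤ Ninv N w :=
  le_csInf (ninv_set_nonempty hN w) fun _ hu => hu.1

lemma N_Ninv (hN : IsYoungOrlicz N) {w : ℝ} (hw : 0 ≤ w) : N (Ninv N w) = w := by
  -- surjectivity via IVT
  obtain ⟨b, hb0, hbw⟩ : ∃ b : ℝ, 0 ≤ b ∧ w ≤ N b := by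
    obtain ⟨u, hu1, hu2⟩ := ((hN.tendsto_atTop.eventually_ge_atTop w).and
      (eventually_ge_atTop (0:ℝ))).exists
    exact ⟨u, hu2, hu1⟩
  have hmem : w ∈ Icc (N 0) (N b) := ⟨by rw [hN.zero]; exact hw, hbw⟩
  obtain ⟨u, hu, hNu⟩ := intermediate_value_Icc hb0 hN.continuous.continuousOn hmem
  have huset : u ∈ {u : ℝ | 0 ≤ u ∧ w ≤ N u} := ⟨hu.1, hNu.ge⟩
  have h1 : Ninv N w ≤ u := csInf_le (ninv_set_bddBelow w) huset
  have hmemInf : Ninv N w ∈ {u : ℝ | 0 ≤ u ∧ w ≤ N u} := by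
    have hclosed : IsClosed {u : ℝ | 0 ≤ u ∧ w ≤ N u} := by
      have : {u : ℝ | 0 ≤ u ∧ w ≤ N u} = {u | 0 ≤ u} ∩ {u | w ≤ N u} := rfl
      rw [this]
      exact (isClosed_le continuous_const continuous_id).inter
        (isClosed_le continuous_const hN.continuous)
    exact hclosed.csInf_mem (ninv_set_nonempty hN w) (ninv_set_bddBelow w)
  refine le_antisymm ?_ hmemInf.2
  calc N (Ninv N w) ≤ N u := hN.strictMonoOn.monotoneOn hmemInf.1 hu.1 h1
    _ = w := hNu

lemma Ninv_le_iff (hN : IsYoungOrlicz N) {w a : ℝ} (hw : 0 ≤ w) (ha : 0 ≤ a) :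
    Ninv N w ≤ a ↔ w ≤ N a := by
  constructor
  · intro h
    have := hN.strictMonoOn.monotoneOn (Ninv_nonneg hN w) ha h
    rwa [N_Ninv hN hw] at this
  · intro h
    exact csInf_le (ninv_set_bddBelow w) ⟨ha, h⟩

lemma le_Ninv_iff (hN : IsYoungOrlicz N) {w a : ℝ} (hw : 0 ≤ w) (ha : 0 ≤ a) :
    a ≤ Ninv N w ↔ N a ≤ w := by
  constructor
  · intro h
    have := hN.strictMonoOn.monotoneOn ha (Ninv_nonneg hN w) h
    rwa [N_Ninv hN hw] at this
  · intro h
    by_contra hlt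
    push_neg at hlt
    have := hN.strictMonoOn (Ninv_nonneg hN w) ha hlt
    rw [N_Ninv hN hw] at this
    exact absurd h (not_le.mpr this)

lemma Ninv_lt_iff (hN : IsYoungOrlicz N) {w a : ℝ} (hw : 0 ≤ w) (ha : 0 ≤ a) :
    Ninv N w < a ↔ w < N a := by
  rw [lt_iff_not_ge, lt_iff_not_ge, le_Ninv_iff hN hw ha]

lemma lt_Ninv_iff (hN : IsYoungOrlicz N) {w a : ℝ} (hw : 0 ≤ w) (ha : 0 ≤ a) :
    a < Ninv N w ↔ N a < w := by
  rw [lt_iff_not_ge, lt_iff_not_ge, Ninv_le_iff hN hw ha]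

lemma Ninv_pos (hN : IsYoungOrlicz N) {w : ℝ} (hw : 0 < w) : 0 < Ninv N w := by
  rw [lt_Ninv_iff hN hw.le le_rfl, hN.zero]; exact hw

lemma Ninv_monotone (hN : IsYoungOrlicz N) : Monotone (Ninv N) := by
  intro w₁ w₂ h
  exact csInf_le_csInf (ninv_set_bddBelow w₁) (ninv_set_nonempty hN w₂)
    (fun u hu => ⟨hu.1, h.trans hu.2⟩)

lemma measurable_Ninv (hN : IsYoungOrlicz N) : Measurable (Ninv N) :=
  (Ninv_monotone hN).measurable

/-- `∫_{w>a} w⁻² dw = a⁻¹` for `a > 0`. -/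
lemma lintegral_Ioi_inv_sq {a : ℝ} (ha : 0 < a) :
    ∫⁻ w in Ioi a, ENNReal.ofReal ((w ^ 2)⁻¹) = ENNReal.ofReal a⁻¹ := by
  have h1 : ∫⁻ w in Ioi a, ENNReal.ofReal ((w ^ 2)⁻¹)
      = ∫⁻ w in Ioi a, ENNReal.ofReal (w ^ (-2:ℝ)) := by
    refine setLIntegral_congr_fun measurableSet_Ioi (fun w hw => ?_)
    have hw0 : 0 < w := ha.trans hw
    rw [show (-2:ℝ) = -((2:ℕ):ℝ) by norm_num, Real.rpow_neg hw0.le, Real.rpow_natCast]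
  have hnn : 0 ≤ᵐ[volume.restrict (Ioi a)] fun w : ℝ => w ^ (-2:ℝ) :=
    (ae_restrict_iff' measurableSet_Ioi).2 (ae_of_all _ fun w hw =>
      Real.rpow_nonneg (ha.trans hw).le _)
  rw [h1, ← ofReal_integral_eq_lintegral_ofReal (integrableOn_Ioi_rpow_of_lt (by norm_num) ha)
    hnn, integral_Ioi_rpow_of_lt (by norm_num) ha]
  rw [show (-2:ℝ) + 1 = -1 by norm_num, Real.rpow_neg_one]
  norm_num

/-- The key identity: `∫_{s>0} V(k₀ · N⁻¹(s)) ds = Q(k₀)`. -/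
lemma lintegral_V_eq_Q {X : Type*} [MeasurableSpace X] (μ : MeasureTheory.Measure X)
    (hN : IsYoungOrlicz N) {k₀ : ℝ} (hk₀ : 0 < k₀) (hμ0 : μ ≠ 0) :
    ∫⁻ s in Ioi (0:ℝ), Vfun μ N (k₀ * Ninv N s) = Qfun μ N k₀ := by
  classical
  set c : ℝ := ((μ Set.univ)⁻¹).toReal with hc
  have hc0 : 0 ≤ c := ENNReal.toReal_nonneg
  set F : ℝ → ℝ → ℝ≥0∞ := fun s w =>
    if N (k₀ * Ninv N s) < w then ENNReal.ofReal ((w ^ 2)⁻¹) else 0 with hF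
  have hm : Measurable fun s => N (k₀ * Ninv N s) :=
    hN.continuous.measurable.comp ((measurable_Ninv hN).const_mul k₀)
  -- Step A: for every w > c, inner integral over s
  have stepA : ∀ w ∈ Ioi c,
      ∫⁻ s in Ioi (0:ℝ), F s w = ENNReal.ofReal (N (Ninv N w / k₀) / w ^ 2) := by
    intro w hw
    have hw0 : 0 < w := lt_of_le_of_lt hc0 hw
    set m : ℝ := N (Ninv N w / k₀) with hmdef
    have hm0 : 0 ≤ m := hN.nonneg _
    have key : ∀ s ∈ Ioi (0:ℝ), F s w = (Iio m).indicator
        (fun _ => ENNReal.ofReal ((w ^ 2)⁻¹)) s := by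
      intro s hs
      have hs0 : (0:ℝ) < s := hs
      have hiff : N (k₀ * Ninv N s) < w ↔ s < m := by
        rw [← lt_Ninv_iff hN (a := k₀ * Ninv N s) hw0.le
          (mul_nonneg hk₀.le (Ninv_nonneg hN s))]
        rw [show k₀ * Ninv N s < Ninv N w ↔ Ninv N s < Ninv N w / k₀ from
          (lt_div_iff₀' hk₀).symm]
        rw [Ninv_lt_iff hN (a := Ninv N w / k₀) hs0.le
          (div_nonneg (Ninv_nonneg hN w) hk₀.le)]
      simp only [hF, Set.indicator, mem_Iio]
      by_cases h : s < m
      · rw [if_pos (hiff.2 h), if_pos h]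
      · rw [if_neg (fun hl => h (hiff.1 hl)), if_neg h]
    rw [setLIntegral_congr_fun measurableSet_Ioi key]
    rw [lintegral_indicator measurableSet_Iio, Measure.restrict_restrict measurableSet_Iio]
    rw [setLIntegral_const]
    have : Iio m ∩ Ioi (0:ℝ) = Ioo 0 m := by
      ext x; simp [mem_Ioo, and_comm]
    rw [this, Real.volume_Ioo]
    rw [← ENNReal.ofReal_mul (by positivity), sub_zero, div_eq_mul_inv, mul_comm]
  -- Step B: for every s > 0, inner integral over w
  have stepB : ∀ s ∈ Ioi (0:ℝ),
      ∫⁻ w in Ioi c, F s w = Vfun μ N (k₀ * Ninv N s) := by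
    intro s hs
    have hs0 : (0:ℝ) < s := hs
    set m : ℝ := N (k₀ * Ninv N s) with hmdef
    have hm0 : 0 < m := hN.pos (mul_pos hk₀ (Ninv_pos hN hs0))
    have hFw : ∀ w : ℝ, F s w = (Ioi m).indicator
        (fun w => ENNReal.ofReal ((w ^ 2)⁻¹)) w := by
      intro w
      simp only [hF, Set.indicator, mem_Ioi]
      rfl
    simp_rw [hFw]
    rw [lintegral_indicator measurableSet_Ioi, Measure.restrict_restrict measurableSet_Ioi,
      Ioi_inter_Ioi]
    have hmax : 0 < m ⊔ c := lt_of_lt_of_le hm0 le_sup_left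
    rw [lintegral_Ioi_inv_sq hmax]
    -- now show ofReal (m ⊔ c)⁻¹ = Vfun μ N (k₀ * Ninv N s)
    rw [Vfun, ← hmdef]
    by_cases htop : μ Set.univ = ⊤
    · have : c = 0 := by simp [hc, htop]
      rw [this, sup_of_le_left hm0.le, htop, min_eq_right le_top]
      · exact ENNReal.ofReal_inv_of_pos hm0
    · have hμpos : μ Set.univ ≠ 0 := by
        simpa [Measure.measure_univ_eq_zero] using hμ0
      set M : ℝ := (μ Set.univ).toReal with hM
      have hM0 : 0 < M := ENNReal.toReal_pos hμpos htop
      have hcM : c = M⁻¹ := by rw [hc, ENNReal.toReal_inv]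
      have hreal : (m ⊔ c)⁻¹ = min M m⁻¹ := by
        rcases le_total c m with h | h
        · rw [sup_of_le_left h, min_eq_right]
          rw [hcM] at h
          calc m⁻¹ ≤ (M⁻¹)⁻¹ := (inv_le_inv₀ hm0 (inv_pos.mpr hM0)).mpr h
            _ = M := inv_inv M
        · rw [sup_of_le_right h, hcM, inv_inv, min_eq_left]
          rw [hcM] at h
          calc M = (M⁻¹)⁻¹ := (inv_inv M).symm
            _ ≤ m⁻¹ := (inv_le_inv₀ (inv_pos.mpr hM0) hm0).mpr h
      rw [hreal]
      have : ENNReal.ofReal (min M m⁻¹) = min (ENNReal.ofReal M) (ENNReal.ofReal m⁻¹) :=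
        Monotone.map_min (fun _ _ h => ENNReal.ofReal_le_ofReal h)
      rw [this, ENNReal.ofReal_toReal htop, ENNReal.ofReal_inv_of_pos hm0]
  -- Tonelli
  have hmble : AEMeasurable (Function.uncurry fun w s => F s w)
      ((volume.restrict (Ioi c)).prod (volume.restrict (Ioi (0:ℝ)))) := by
    apply Measurable.aemeasurable
    have : (Function.uncurry fun w s => F s w)
        = fun p : ℝ × ℝ => if N (k₀ * Ninv N p.2) < p.1
          then ENNReal.ofReal ((p.1 ^ 2)⁻¹) else 0 := rfl
    rw [this]
    exact Measurable.ite (measurableSet_lt (hm.comp measurable_snd) measurable_fst)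
      (ENNReal.measurable_ofReal.comp ((measurable_fst.pow_const 2).inv)) measurable_const
  calc ∫⁻ s in Ioi (0:ℝ), Vfun μ N (k₀ * Ninv N s)
      = ∫⁻ s in Ioi (0:ℝ), ∫⁻ w in Ioi c, F s w :=
        (setLIntegral_congr_fun measurableSet_Ioi (fun s hs =>
          (stepB s hs).symm))
    _ = ∫⁻ w in Ioi c, ∫⁻ s in Ioi (0:ℝ), F s w :=
        (lintegral_lintegral_swap hmble).symm
    _ = ∫⁻ w in Ioi c, ENNReal.ofReal (N (Ninv N w / k₀) / w ^ 2) :=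
        setLIntegral_congr_fun measurableSet_Ioi stepA
    _ = Qfun μ N k₀ := rfl

end Aux

theorem strongNorm_le_kZero_mul_weakNorm
    {X : Type*} [MeasurableSpace X] (μ : MeasureTheory.Measure X) [SigmaFinite μ]
    (hμ0 : μ ≠ 0) (hatomless : Atomless μ)
    (N : ℝ → ℝ) (hN : IsYoungOrlicz N)
    (ν : MeasureTheory.Measure ℝ)
    (hν : ∀ t : ℝ, 0 < t → ν (Set.Ioi t) = Vfun μ N t)
    (hJ : ∃ C : ℝ, 0 < C ∧ ∫⁻ t in Set.Ioi (0:ℝ), ENNReal.ofReal (N (C * t)) ∂ν < ⊤)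
    (k₀ : ℝ) (hk₀ : 1 < k₀) (hQ : Qfun μ N k₀ = 1)
    (f : X → ℝ) (hf : Measurable f) (hw : weakNorm μ N f ≠ ⊤) :
    strongNorm μ N f ≤ ENNReal.ofReal k₀ * weakNorm μ N f := by
  have k₀pos : 0 < k₀ := lt_trans one_pos hk₀
  -- main estimate: each admissible weak constant K gives a strong constant k₀ * K
  have main : ∀ K : ℝ, 0 < K → (∀ t > 0, tailFun μ f t ≤ Vfun μ N (t / K)) →
      strongNorm μ N f ≤ ENNReal.ofReal (k₀ * K) := by
    intro K hK hT
    have hkK : 0 < k₀ * K := mul_pos k₀pos hK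
    apply sInf_le
    refine ⟨k₀ * K, ⟨hkK, ?_⟩, rfl⟩
    have nn : 0 ≤ᵐ[μ] fun x => N (|f x| / (k₀ * K)) := ae_of_all _ fun x => hN.nonneg _
    have mble : AEMeasurable (fun x => N (|f x| / (k₀ * K))) μ :=
      (hN.continuous.measurable.comp (hf.abs.div_const _)).aemeasurable
    rw [lintegral_eq_lintegral_meas_le μ nn mble]
    have measV : Measurable fun u : ℝ => Vfun μ N (k₀ * Ninv N u) := by
      apply Measurable.min measurable_const
      exact (ENNReal.measurable_ofReal.comp
        (hN.continuous.measurable.comp ((measurable_Ninv hN).const_mul k₀))).inv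
    calc ∫⁻ u in Ioi (0:ℝ), μ {x | u ≤ N (|f x| / (k₀ * K))}
        ≤ ∫⁻ u in Ioi (0:ℝ), Vfun μ N (k₀ * Ninv N u) := by
          refine setLIntegral_mono measV fun u hu => ?_
          have hu0 : (0:ℝ) < u := hu
          have hNinvu : 0 < Ninv N u := Ninv_pos hN hu0
          have hsub : {x | u ≤ N (|f x| / (k₀ * K))} ⊆ {x | k₀ * K * Ninv N u ≤ |f x|} := by
            intro x hx
            have h1 : Ninv N u ≤ |f x| / (k₀ * K) :=
              (Ninv_le_iff hN hu0.le (by positivity)).2 hx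
            have := (le_div_iff₀ hkK).1 h1
            simpa [mul_comm] using this
          calc μ {x | u ≤ N (|f x| / (k₀ * K))} ≤ μ {x | k₀ * K * Ninv N u ≤ |f x|} :=
                measure_mono hsub
            _ = tailFun μ f (k₀ * K * Ninv N u) := rfl
            _ ≤ Vfun μ N ((k₀ * K * Ninv N u) / K) := hT _ (by positivity)
            _ = Vfun μ N (k₀ * Ninv N u) := by
                congr 1
                field_simp
      _ = Qfun μ N k₀ := lintegral_V_eq_Q μ hN k₀pos hμ0
      _ ≤ 1 := le_of_eq hQ
  -- assemble: divide by k₀ and take inf over K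
  have hk0ne : (ENNReal.ofReal k₀ : ℝ≥0∞) ≠ 0 := by
    simp [ENNReal.ofReal_eq_zero, not_le, k₀pos]
  have hk0top : (ENNReal.ofReal k₀ : ℝ≥0∞) ≠ ⊤ := ENNReal.ofReal_ne_top
  rw [mul_comm, ← ENNReal.div_le_iff_le_mul (Or.inl hk0ne) (Or.inl hk0top)]
  refine le_sInf ?_
  rintro b ⟨K, ⟨hK, hT⟩, rfl⟩
  rw [ENNReal.div_le_iff_le_mul (Or.inl hk0ne) (Or.inl hk0top)]
  calc strongNorm μ N f ≤ ENNReal.ofReal (k₀ * K) := main K hK hT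
    _ = ENNReal.ofReal K * ENNReal.ofReal k₀ := by
        rw [ENNReal.ofReal_mul k₀pos.le, mul_comm]
end

section
/- Let μ be a probability measure, m > 1, and N^{(m)}(u) = exp(|u|^m/m) − 1. Then the exact embedding constant k₀[N^{(m)}] (the unique k ∈ (1, ∞) with Q[N^{(m)}](k) = 1) equals β₀^{-1/m}, where β₀ ∈ (0, 1) is the unique solution of G(β₀) = 2; equivalently, G(k₀[N^{(m)}]^{-m}) = 2. -/
open MeasureTheory ENNReal Set Filter Topology

lemma Ninv_exp (m : ℝ) (hm : 1 < m) (w : ℝ) (hw : 0 ≤ w) :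
    Ninv (fun u : ℝ => Real.exp (|u| ^ m / m) - 1) w = (m * Real.log (1 + w)) ^ (1/m : ℝ) := by
  have hm0 : (0:ℝ) < m := by linarith
  have hlog : 0 ≤ Real.log (1 + w) := Real.log_nonneg (by linarith)
  have h0 : 0 ≤ m * Real.log (1 + w) := mul_nonneg hm0.le hlog
  set u₀ := (m * Real.log (1 + w)) ^ (1/m : ℝ) with hu₀
  have hu₀0 : 0 ≤ u₀ := Real.rpow_nonneg h0 _
  have hpow : u₀ ^ m = m * Real.log (1 + w) := by
    rw [hu₀, ← Real.rpow_mul h0, one_div_mul_cancel hm0.ne', Real.rpow_one]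
  apply IsLeast.csInf_eq
  constructor
  · refine ⟨hu₀0, ?_⟩
    simp only [abs_of_nonneg hu₀0, hpow, mul_div_cancel_left₀ _ hm0.ne',
      Real.exp_log (by linarith : (0:ℝ) < 1 + w)]
    linarith
  · rintro u ⟨hu0, hwu⟩
    simp only [abs_of_nonneg hu0] at hwu
    have h1 : Real.log (1 + w) ≤ u ^ m / m := by
      rw [Real.log_le_iff_le_exp (by linarith : (0:ℝ) < 1 + w)]
      linarith
    have h2 : m * Real.log (1 + w) ≤ u ^ m := by
      have := (le_div_iff₀ hm0).mp h1
      linarith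
    calc u₀ ≤ (u ^ m) ^ (1/m : ℝ) := Real.rpow_le_rpow h0 h2 (by positivity)
    _ = u := by rw [← Real.rpow_mul hu0, mul_one_div_cancel hm0.ne', Real.rpow_one]


lemma Gfun_lt {a b : ℝ} (hab : a < b) (hfin : Gfun a ≠ ⊤) : Gfun a < Gfun b := by
  unfold Gfun
  apply lintegral_strict_mono
  · simp [Measure.restrict_eq_zero, Real.volume_Ioo]
  · apply ENNReal.measurable_ofReal.comp_aemeasurable
    apply ContinuousOn.aemeasurable _ measurableSet_Ioo
    apply ContinuousOn.mul
    · exact (continuous_const.sub continuous_id).continuousOn.rpow_const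
        (fun z hz => Or.inl (by rw [mem_Ioo] at hz; intro h; simp at h; linarith [hz.2]))
    · exact continuousOn_id.rpow_const (fun z hz => Or.inl (ne_of_gt hz.1))
  · exact hfin
  · rw [ae_restrict_iff' measurableSet_Ioo]
    filter_upwards with z hz
    rw [mem_Ioo] at hz
    have h1z : (0:ℝ) < 1 - z := by linarith [hz.2]
    apply ENNReal.ofReal_lt_ofReal_iff_of_nonneg (mul_nonneg (Real.rpow_nonneg h1z.le _) (Real.rpow_nonneg hz.1.le _)) |>.mpr
    exact mul_lt_mul_of_pos_left
      (Real.rpow_lt_rpow_of_exponent_gt hz.1 (by linarith [hz.2]) (by linarith)) (by positivity)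

lemma lint_one : ∫⁻ z in Set.Ioo (0:ℝ) (1/2), ENNReal.ofReal ((1 - z) ^ (-(2:ℝ))) = 1 := by
  have hcont : ContinuousOn (fun z : ℝ => (1 - z) ^ (-(2:ℝ))) (Set.Icc 0 (1/2)) :=
    (continuous_const.sub continuous_id).continuousOn.rpow_const
      (fun z hz => Or.inl (by rw [mem_Icc] at hz; intro h; simp at h; linarith [hz.2]))
  have hint : IntegrableOn (fun z : ℝ => (1 - z) ^ (-(2:ℝ))) (Set.Ioo 0 (1/2)) :=
    (hcont.integrableOn_Icc).mono_set Set.Ioo_subset_Icc_self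
  rw [← ofReal_integral_eq_lintegral_ofReal hint]
  · have hioo : ∫ z in Set.Ioo (0:ℝ) (1/2), (1 - z) ^ (-(2:ℝ)) = 1 := by
      rw [← integral_Ioc_eq_integral_Ioo, ← intervalIntegral.integral_of_le (by norm_num : (0:ℝ) ≤ 1/2)]
      have : ∫ z in (0:ℝ)..(1/2), (1 - z) ^ (-(2:ℝ)) = (1 - (1/2:ℝ))⁻¹ - (1 - (0:ℝ))⁻¹ := by
        apply intervalIntegral.integral_eq_sub_of_hasDerivAt (f := fun x => (1 - x)⁻¹)
        · intro x hx
          rw [Set.uIcc_of_le (by norm_num : (0:ℝ) ≤ 1/2), mem_Icc] at hx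
          have hne : (1:ℝ) - x ≠ 0 := by intro h; linarith [hx.2]
          have := ((hasDerivAt_id x).const_sub 1).inv hne
          refine this.congr_deriv ?_
          have h1x : (0:ℝ) < 1 - x := by
            linarith [hx.2]
          simp only [id]
          rw [Real.rpow_neg h1x.le, show ((2:ℝ)) = ((2:ℕ):ℝ) by norm_num, Real.rpow_natCast]
          field_simp
        · apply ContinuousOn.intervalIntegrable
          rw [Set.uIcc_of_le (by norm_num : (0:ℝ) ≤ 1/2)]
          exact hcont
      rw [this]; norm_num
    rw [hioo]; exact ENNReal.ofReal_one
  · rw [EventuallyLE, ae_restrict_iff' measurableSet_Ioo]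
    filter_upwards with z hz
    rw [mem_Ioo] at hz
    have : (0:ℝ) < 1 - z := by linarith [hz.2]
    positivity

lemma image_inv_sub : (fun z : ℝ => z⁻¹ - 1) '' Set.Ioo 0 (1/2) = Set.Ioi 1 := by
  ext w
  constructor
  · rintro ⟨z, hz, rfl⟩
    rw [mem_Ioo] at hz
    have h2 : (2:ℝ) < z⁻¹ := by
      rw [show z⁻¹ = 1/z by ring, lt_div_iff₀ hz.1]; linarith [hz.2]
    rw [mem_Ioi]; linarith
  · intro hw
    rw [mem_Ioi] at hw
    have h1w : (0:ℝ) < 1 + w := by linarith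
    refine ⟨(1+w)⁻¹, ⟨inv_pos.mpr h1w, ?_⟩, ?_⟩
    · rw [show (1+w)⁻¹ = 1/(1+w) by ring, div_lt_div_iff₀ h1w (by norm_num)]; linarith
    · show ((1+w)⁻¹)⁻¹ - 1 = w
      rw [inv_inv]; ring

lemma key_eq (α : ℝ) (hα : 0 < α) :
    Gfun α = (∫⁻ w in Set.Ioi (1:ℝ), ENNReal.ofReal (((1+w) ^ α - 1) / w ^ 2)) + 1 := by
  have hcont2 : AEMeasurable (fun z : ℝ => ENNReal.ofReal ((1 - z) ^ (-(2:ℝ))))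
      (volume.restrict (Set.Ioo (0:ℝ) (1/2))) := by
    apply ENNReal.measurable_ofReal.comp_aemeasurable
    apply ContinuousOn.aemeasurable _ measurableSet_Ioo
    exact (continuous_const.sub continuous_id).continuousOn.rpow_const
      (fun z hz => Or.inl (by rw [mem_Ioo] at hz; intro h; simp at h; linarith [hz.2]))
  have hsplit : Gfun α
      = ∫⁻ z in Set.Ioo (0:ℝ) (1/2), (ENNReal.ofReal ((1 - z) ^ (-(2:ℝ)) * (z ^ (-α) - 1))
        + ENNReal.ofReal ((1 - z) ^ (-(2:ℝ)))) := by
    unfold Gfun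
    apply setLIntegral_congr_fun measurableSet_Ioo
    intro z hz
    beta_reduce
    rw [mem_Ioo] at hz
    have h1z : (0:ℝ) < 1 - z := by linarith [hz.2]
    have hone : (1:ℝ) ≤ z ^ (-α) := by
      have := Real.rpow_le_rpow_of_exponent_ge hz.1 (by linarith [hz.2] : z ≤ 1)
        (by linarith : -α ≤ (0:ℝ))
      simpa using this
    rw [← ENNReal.ofReal_add (mul_nonneg (Real.rpow_nonneg h1z.le _) (by linarith))
      (Real.rpow_nonneg h1z.le _)]
    congr 1; ring
  rw [hsplit, lintegral_add_right' _ hcont2, lint_one]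
  congr 1
  -- change of variables
  have hderiv : ∀ z ∈ Set.Ioo (0:ℝ) (1/2), HasFDerivWithinAt (fun z : ℝ => z⁻¹ - 1)
      ((1 : ℝ →L[ℝ] ℝ).smulRight (-(z^2)⁻¹)) (Set.Ioo (0:ℝ) (1/2)) z := by
    intro z hz
    exact (((hasDerivAt_inv (ne_of_gt hz.1)).sub_const 1).hasDerivWithinAt).hasFDerivWithinAt
  have hinj : Set.InjOn (fun z : ℝ => z⁻¹ - 1) (Set.Ioo (0:ℝ) (1/2)) := by
    intro a _ b _ h
    simp only at h
    have : a⁻¹ = b⁻¹ := by linarith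
    exact inv_injective this
  have hchg := lintegral_image_eq_lintegral_abs_det_fderiv_mul volume measurableSet_Ioo hderiv
    hinj (fun w => ENNReal.ofReal (((1+w) ^ α - 1) / w ^ 2))
  rw [image_inv_sub] at hchg
  rw [hchg]
  apply (setLIntegral_congr_fun measurableSet_Ioo _).symm
  intro z hz
  beta_reduce
  rw [mem_Ioo] at hz
  have hz0 : (0:ℝ) < z := hz.1
  have h1z : (0:ℝ) < 1 - z := by linarith [hz.2]
  rw [ContinuousLinearMap.smulRight_one_eq_toSpanSingleton, ContinuousLinearMap.det_toSpanSingleton, abs_neg, abs_inv, abs_of_nonneg (by positivity : (0:ℝ) ≤ z^2),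
    ← ENNReal.ofReal_mul (by positivity)]
  congr 1
  have e1 : 1 + (z⁻¹ - 1) = z⁻¹ := by ring
  have e2 : (z⁻¹ : ℝ) ^ α = (z ^ α)⁻¹ := Real.inv_rpow hz0.le α
  have e3 : z ^ (-α) = (z ^ α)⁻¹ := Real.rpow_neg hz0.le α
  have e4 : (1 - z) ^ (-(2:ℝ)) = ((1-z)^2)⁻¹ := by
    rw [Real.rpow_neg h1z.le, show ((2:ℝ)) = ((2:ℕ):ℝ) by norm_num, Real.rpow_natCast]
  have hzα : (0:ℝ) < z ^ α := Real.rpow_pos_of_pos hz0 α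
  rw [e1, e2, e3, e4]
  have e5 : (z⁻¹ - 1)^2 = (1-z)^2 / z^2 := by field_simp
  rw [e5]
  set y := (z ^ α)⁻¹ - 1 with hy
  have hz2 : (z:ℝ)^2 ≠ 0 := by positivity
  have h1z2 : ((1:ℝ)-z)^2 ≠ 0 := by positivity
  field_simp

theorem kZero_exponential_eq
    {X : Type*} [MeasurableSpace X] (μ : MeasureTheory.Measure X)
    [MeasureTheory.IsProbabilityMeasure μ]
    (m : ℝ) (hm : 1 < m)
    (β₀ : ℝ) (hβ₀ : β₀ ∈ Set.Ioo (0:ℝ) 1) (hG : Gfun β₀ = 2)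
    (k₀ : ℝ) (hk₀ : 1 < k₀)
    (hQ : Qfun μ (fun u : ℝ => Real.exp (|u| ^ m / m) - 1) k₀ = 1) :
    k₀ = β₀ ^ (-(1/m)) ∧ Gfun (k₀ ^ (-m)) = 2 := by
  have hm0 : (0:ℝ) < m := by linarith
  have hk0 : (0:ℝ) < k₀ := by linarith
  set α := k₀ ^ (-m) with hα
  have hα0 : 0 < α := Real.rpow_pos_of_pos hk0 _
  have hα1 : α < 1 := Real.rpow_lt_one_of_one_lt_of_neg hk₀ (by linarith)
  -- rewrite Qfun
  have hQeq : Qfun μ (fun u : ℝ => Real.exp (|u| ^ m / m) - 1) k₀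
      = ∫⁻ w in Set.Ioi (1:ℝ), ENNReal.ofReal (((1+w) ^ α - 1) / w ^ 2) := by
    unfold Qfun
    have huniv : ((μ Set.univ)⁻¹).toReal = 1 := by simp [measure_univ]
    rw [huniv]
    apply setLIntegral_congr_fun measurableSet_Ioi
    intro w hw
    beta_reduce
    rw [Set.mem_Ioi] at hw
    congr 2
    rw [Ninv_exp m hm w (by linarith)]
    set u₀ := (m * Real.log (1 + w)) ^ (1/m : ℝ) with hu₀
    have hlog : 0 ≤ Real.log (1 + w) := Real.log_nonneg (by linarith)
    have h0 : 0 ≤ m * Real.log (1 + w) := mul_nonneg hm0.le hlog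
    have hu₀0 : 0 ≤ u₀ := Real.rpow_nonneg h0 _
    have hpow : u₀ ^ m = m * Real.log (1 + w) := by
      rw [hu₀, ← Real.rpow_mul h0, one_div_mul_cancel hm0.ne', Real.rpow_one]
    have habs : |u₀ / k₀| = u₀ / k₀ := abs_of_nonneg (div_nonneg hu₀0 hk0.le)
    have hdiv : (u₀ / k₀) ^ m = u₀ ^ m / k₀ ^ m := Real.div_rpow hu₀0 hk0.le m
    have hkm : (0:ℝ) < k₀ ^ m := Real.rpow_pos_of_pos hk0 m
    have hrpow : (1 + w) ^ α = Real.exp (Real.log (1 + w) * α) :=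
      Real.rpow_def_of_pos (by linarith) α
    show Real.exp (|u₀ / k₀| ^ m / m) - 1 = (1 + w) ^ α - 1
    rw [habs, hdiv, hpow, hrpow, hα, Real.rpow_neg hk0.le]
    congr 1
    field_simp
  rw [hQeq] at hQ
  have hGα : Gfun α = 2 := by
    rw [key_eq α hα0, hQ]
    exact one_add_one_eq_two
  have hαβ : α = β₀ := by
    rcases lt_trichotomy α β₀ with h | h | h
    · exfalso
      have := Gfun_lt h (by rw [hGα]; exact (by simp : (2:ℝ≥0∞) ≠ ⊤))
      rw [hGα, hG] at this
      exact lt_irrefl _ this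
    · exact h
    · exfalso
      have := Gfun_lt h (by rw [hG]; exact (by simp : (2:ℝ≥0∞) ≠ ⊤))
      rw [hGα, hG] at this
      exact lt_irrefl _ this
  refine ⟨?_, hGα⟩
  rw [← hαβ, hα, ← Real.rpow_mul hk0.le]
  rw [show (-m) * (-(1/m)) = m * (1/m) by ring, mul_one_div_cancel hm0.ne', Real.rpow_one]
end
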